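/- Let X be a real symmetric positive semidefinite n×n matrix all of whose entries lie in {0,1} and with X(i,i) = 1 for every index i. Then the binary relation on {1,…,n} defined by i ~ j if and only if X(i,j) = 1 is an equivalence relation (reflexive, symmetric, and transitive). -/

import Mathlib

/-- For a binary symmetric PSD matrix with unit diagonal, the relation
`X i j = 1` is an equivalence relation. -/
theorem binary_psd_equivalence
    (n : ℕ) (X : Matrix (Fin n) (Fin n) ℝ)
    (hbin : ∀ i j, X i j = 0 ∨ X i j = 1)
    (hpsd : X.PosSemidef)
    (hdiag : ∀ i, X i i = 1) :
    Equivalence (fun i j : Fin n => X i j = 1) := by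
  have hsym : ∀ i j, X j i = X i j := by
    intro i j
    have h := hpsd.1
    have := congrFun (congrFun h.symm j) i
    simpa [Matrix.conjTranspose_apply] using this
  refine ⟨fun i => hdiag i, ?_, ?_⟩
  · intro i j h
    rw [hsym]; exact h
  · intro i j k hij hjk
    by_cases hik : i = k
    · subst hik; exact hdiag i
    by_cases h1 : i = j
    · subst h1; exact hjk
    by_cases h2 : j = k
    · subst h2; exact hij
    set v : Fin n → ℝ := Pi.single i 1 - Pi.single j 1 + Pi.single k 1 with hv
    have hq := hpsd.dotProduct_mulVec_nonneg v
    rw [show star v = v from star_trivial v] at hq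
    have hexp : dotProduct v (X.mulVec v) = 2 * X i k - 1 := by
      simp only [hv, Matrix.mulVec_add, Matrix.mulVec_sub, Matrix.mulVec_single_one, Matrix.col_apply,
        dotProduct_add, dotProduct_sub, add_dotProduct, sub_dotProduct, single_dotProduct]
      simp only [Pi.add_apply, Pi.sub_apply, mul_one, one_mul]
      rw [hdiag, hdiag, hdiag, hsym i j, hsym i k, hsym j k, hij, hjk]
      ring
    rw [hexp] at hq
    rcases hbin i k with h0 | h1
    · rw [h0] at hq; linarith
    · exact h1
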